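/- For every real x ∈ (0,1] and ν ∈ (0.5, 1], the function g(x) = x^{-ν}(1 − (1+x)^{-ν}) satisfies g(x) ≤ ν((1−ν)/(2ν))^{1−ν} when ν ∈ (log₂ 1.5, 1], and g(x) ≤ 1 − 2^{-ν} when ν ∈ (0.5, log₂ 1.5]. -/

import Mathlib

set_option maxHeartbeats 1000000

open Real Set Filter

namespace Stmt1Aux

/-- rational-power upper bound: from `a^p ≤ c^q` deduce `a^(p/q) ≤ c`. -/
lemma rpow_div_le {a c : ℝ} (p q : ℕ) (ha : 0 < a) (hc : 0 < c) (hq : q ≠ 0)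
    (h : a ^ p ≤ c ^ q) : a ^ ((p : ℝ) / (q : ℝ)) ≤ c := by
  have hq' : 0 < (q : ℝ) := by exact_mod_cast Nat.pos_of_ne_zero hq
  have h1 : (a ^ ((p : ℝ) / (q : ℝ))) ^ (q : ℕ) = a ^ (p : ℕ) := by
    rw [← Real.rpow_natCast (a ^ ((p : ℝ) / (q : ℝ))) q, ← Real.rpow_mul ha.le,
      div_mul_cancel₀ _ hq'.ne', Real.rpow_natCast]
  have h2 : (a ^ ((p : ℝ) / (q : ℝ))) ^ (q : ℕ) ≤ c ^ (q : ℕ) := by rw [h1]; exact h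
  exact le_of_pow_le_pow_left₀ hq hc.le h2

/-- rational-power lower bound: from `c^q ≤ a^p` deduce `c ≤ a^(p/q)`. -/
lemma le_rpow_div {a c : ℝ} (p q : ℕ) (ha : 0 < a) (hc : 0 < c) (hq : q ≠ 0)
    (h : c ^ q ≤ a ^ p) : c ≤ a ^ ((p : ℝ) / (q : ℝ)) := by
  have hq' : 0 < (q : ℝ) := by exact_mod_cast Nat.pos_of_ne_zero hq
  have h1 : (a ^ ((p : ℝ) / (q : ℝ))) ^ (q : ℕ) = a ^ (p : ℕ) := by
    rw [← Real.rpow_natCast (a ^ ((p : ℝ) / (q : ℝ))) q, ← Real.rpow_mul ha.le,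
      div_mul_cancel₀ _ hq'.ne', Real.rpow_natCast]
  have h2 : c ^ (q : ℕ) ≤ (a ^ ((p : ℝ) / (q : ℝ))) ^ (q : ℕ) := by rw [h1]; exact h
  exact le_of_pow_le_pow_left₀ hq (Real.rpow_nonneg ha.le _) h2

lemma rpow_div_lt {a c : ℝ} (p q : ℕ) (ha : 0 < a) (hc : 0 < c) (hq : q ≠ 0)
    (h : a ^ p < c ^ q) : a ^ ((p : ℝ) / (q : ℝ)) < c := by
  have hq' : 0 < (q : ℝ) := by exact_mod_cast Nat.pos_of_ne_zero hq
  have h1 : (a ^ ((p : ℝ) / (q : ℝ))) ^ (q : ℕ) = a ^ (p : ℕ) := by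
    rw [← Real.rpow_natCast (a ^ ((p : ℝ) / (q : ℝ))) q, ← Real.rpow_mul ha.le,
      div_mul_cancel₀ _ hq'.ne', Real.rpow_natCast]
  have h2 : (a ^ ((p : ℝ) / (q : ℝ))) ^ (q : ℕ) < c ^ (q : ℕ) := by rw [h1]; exact h
  exact lt_of_pow_lt_pow_left₀ q hc.le h2

lemma key1 {ν y : ℝ} (hν0 : 0 ≤ ν) (hν1 : ν ≤ 1) (hy : 0 ≤ y) :
    1 - (1 + y) ^ (-ν) ≤ ν * y * (1 + y) ^ (-ν) := by
  have hb : (0:ℝ) < 1 + y := by linarith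
  have hB : (1 + y) ^ ν ≤ 1 + ν * y :=
    rpow_one_add_le_one_add_mul_self (by linarith : (-1:ℝ) ≤ y) hν0 hν1
  have hinv : (0:ℝ) < (1 + y) ^ (-ν) := Real.rpow_pos_of_pos hb _
  have hprod : (1 + y) ^ ν * (1 + y) ^ (-ν) = 1 := by
    rw [← Real.rpow_add hb]; simp
  nlinarith [mul_le_mul_of_nonneg_right hB hinv.le]

lemma key0 {ν y : ℝ} (hν0 : 0 ≤ ν) (hν1 : ν ≤ 1) (hy : 0 ≤ y) :
    1 - (1 + y) ^ (-ν) ≤ ν * y := by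
  have hb : (0:ℝ) < 1 + y := by linarith
  have h1 := key1 hν0 hν1 hy
  have h2 : (1 + y) ^ (-ν) ≤ 1 :=
    Real.rpow_le_one_of_one_le_of_nonpos (by linarith) (by linarith)
  nlinarith [mul_nonneg hν0 hy]

lemma caseNu1 {x : ℝ} (hx : x ∈ Ioc (0:ℝ) 1) :
    x ^ (-(1:ℝ)) * (1 - (1 + x) ^ (-(1:ℝ))) ≤ 1 * ((1-1)/(2*1) : ℝ) ^ ((1-1:ℝ)) := by
  obtain ⟨hx0, hx1⟩ := hx
  rw [Real.rpow_neg_one, Real.rpow_neg_one]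
  have h1 : (0:ℝ) < 1 + x := by linarith
  have : x⁻¹ * (1 - (1+x)⁻¹) = 1/(1+x) := by field_simp; ring
  rw [this]
  simp [Real.rpow_zero]
  rw [inv_le_one_iff₀]; right; linarith

lemma crit' {ν : ℝ} (hν1 : 1/2 < ν) (hν2 : ν < 1) {C : ℝ} (hC : 0 ≤ C)
    (h1 : 1 - (2:ℝ) ^ (-ν) ≤ C)
    (hcrit : ∀ z : ℝ, z ∈ Ioo (0:ℝ) 1 → (1+z) ^ (1+ν) = 1 + 2*z →
      z ^ (1-ν) * (1+z) ^ (-(1+ν)) ≤ C)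
    {x : ℝ} (hx : x ∈ Ioc (0:ℝ) 1) :
    x ^ (-ν) * (1 - (1 + x) ^ (-ν)) ≤ C := by
  have hν0 : (0:ℝ) < ν := by linarith
  set G : ℝ → ℝ := fun y => y ^ (-ν) * (1 - (1 + y) ^ (-ν)) with hG
  -- nonnegativity and upper bound on [0,1]
  have hGnn : ∀ y ∈ Icc (0:ℝ) 1, 0 ≤ G y := by
    intro y hy
    rcases eq_or_lt_of_le hy.1 with h | h
    · simp [hG, ← h, Real.zero_rpow (neg_ne_zero.mpr hν0.ne')]
    · have h2 : (1 + y) ^ (-ν) ≤ 1 :=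
        Real.rpow_le_one_of_one_le_of_nonpos (by linarith) (by linarith)
      exact mul_nonneg (Real.rpow_nonneg h.le _) (by linarith)
  have hGub : ∀ y ∈ Icc (0:ℝ) 1, G y ≤ ν * y ^ (1-ν) := by
    intro y hy
    rcases eq_or_lt_of_le hy.1 with h | h
    · simp [hG, ← h, Real.zero_rpow (neg_ne_zero.mpr hν0.ne'),
        Real.zero_rpow (by linarith : (1:ℝ)-ν ≠ 0)]
    · have hk := key0 hν0.le hν2.le h.le
      have hxp : (0:ℝ) < y ^ (-ν) := Real.rpow_pos_of_pos h _
      have : G y ≤ y ^ (-ν) * (ν * y) := by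
        exact mul_le_mul_of_nonneg_left hk hxp.le
      calc G y ≤ y ^ (-ν) * (ν * y) := this
        _ = ν * (y ^ (-ν) * y ^ (1:ℝ)) := by rw [Real.rpow_one]; ring
        _ = ν * y ^ (1-ν) := by rw [← Real.rpow_add h]; ring_nf
  -- continuity on [0,1]
  have hGcont : ContinuousOn G (Icc 0 1) := by
    intro y hy
    rcases eq_or_lt_of_le hy.1 with h | h
    · -- at 0 : squeeze
      have hG0 : G 0 = 0 := by
        simp [hG, Real.zero_rpow (neg_ne_zero.mpr hν0.ne')]
      rw [ContinuousWithinAt, ← h, hG0]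
      have htend : Tendsto (fun y : ℝ => ν * y ^ (1-ν)) (nhdsWithin 0 (Icc 0 1)) (nhds 0) := by
        have hc : ContinuousAt (fun y : ℝ => y ^ ((1:ℝ)-ν)) 0 := by
          apply Real.continuousAt_rpow_const
          right; linarith
        have : Tendsto (fun y : ℝ => y ^ ((1:ℝ)-ν)) (nhds 0) (nhds ((0:ℝ) ^ ((1:ℝ)-ν))) := hc
        rw [Real.zero_rpow (by linarith : (1:ℝ)-ν ≠ 0)] at this
        have h2 : Tendsto (fun y : ℝ => ν * y ^ ((1:ℝ)-ν)) (nhds 0) (nhds (ν * 0)) :=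
          this.const_mul ν
        rw [mul_zero] at h2
        exact h2.mono_left (nhdsWithin_le_nhds (s := Icc (0:ℝ) 1))
      apply squeeze_zero'
      · filter_upwards [self_mem_nhdsWithin] with y hy using hGnn y hy
      · filter_upwards [self_mem_nhdsWithin] with y hy using hGub y hy
      · exact htend
    · -- at positive point
      apply ContinuousAt.continuousWithinAt
      have c1 : ContinuousAt (fun y : ℝ => y ^ (-ν)) y :=
        Real.continuousAt_rpow_const _ _ (Or.inl h.ne')
      have c2 : ContinuousAt (fun y : ℝ => (1 + y) ^ (-ν)) y := by
        have : ContinuousAt (fun y : ℝ => 1 + y) y := by fun_prop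
        exact ContinuousAt.rpow_const this (Or.inl (by positivity))
      exact c1.mul (continuousAt_const.sub c2)
  -- max on compact
  obtain ⟨z, hzmem, hzmax⟩ := isCompact_Icc.exists_isMaxOn (⟨0, by norm_num⟩ : (Icc (0:ℝ) 1).Nonempty) hGcont
  have hxle : G x ≤ G z := hzmax ⟨hx.1.le, hx.2⟩
  rcases eq_or_lt_of_le hzmem.1 with h0 | h0
  · -- max at 0
    have : G z = 0 := by
      simp [hG, ← h0, Real.zero_rpow (neg_ne_zero.mpr hν0.ne')]
    calc G x ≤ G z := hxle
      _ = 0 := this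
      _ ≤ C := hC
  rcases eq_or_lt_of_le hzmem.2 with h1' | h1'
  · -- max at 1
    have : G z = 1 - (2:ℝ) ^ (-ν) := by
      rw [hG]; simp only [h1']
      norm_num
    calc G x ≤ G z := hxle
      _ = 1 - (2:ℝ) ^ (-ν) := this
      _ ≤ C := h1
  · -- interior max
    have hzpos : 0 < z := h0
    have hz1 : z < 1 := h1'
    have hbz : (0:ℝ) < 1 + z := by linarith
    -- derivative of G at z
    have d1 : HasDerivAt (fun y : ℝ => y ^ (-ν)) (-ν * z ^ (-ν - 1)) z := by
      simpa using Real.hasDerivAt_rpow_const (p := -ν) (Or.inl hzpos.ne')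
    have dinner : HasDerivAt (fun y : ℝ => 1 + y) 1 z := by
      simpa using (hasDerivAt_id z).const_add (1:ℝ)
    have d2 : HasDerivAt (fun y : ℝ => (1 + y) ^ (-ν)) (-ν * (1 + z) ^ (-ν - 1)) z := by
      have := HasDerivAt.rpow_const (p := -ν) dinner (Or.inl hbz.ne')
      simpa using this
    have d3 : HasDerivAt (fun y : ℝ => 1 - (1 + y) ^ (-ν)) (ν * (1 + z) ^ (-ν - 1)) z := by
      have := (hasDerivAt_const z (1:ℝ)).sub d2
      simp at this; exact this
    have dG : HasDerivAt G
        ((-ν * z ^ (-ν - 1)) * (1 - (1 + z) ^ (-ν)) + z ^ (-ν) * (ν * (1 + z) ^ (-ν - 1))) z :=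
      d1.mul d3
    have hloc : IsLocalMax G z := by
      apply hzmax.isLocalMax
      exact Icc_mem_nhds h0 h1'
    have hD0 : (-ν * z ^ (-ν - 1)) * (1 - (1 + z) ^ (-ν)) + z ^ (-ν) * (ν * (1 + z) ^ (-ν - 1)) = 0 := by
      rw [← dG.deriv]
      exact hloc.deriv_eq_zero
    -- derive : 1 - (1+z)^(-ν) = z * (1+z)^(-ν-1)
    have hz1p : z ^ (-ν - 1) * z = z ^ (-ν) := by
      have h := Real.rpow_add hzpos (-ν-1) 1
      rw [Real.rpow_one] at h
      rw [← h]
      congr 1; ring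
    have heq1 : 1 - (1 + z) ^ (-ν) = z * (1 + z) ^ (-ν - 1) := by
      have hzp : (0:ℝ) < z ^ (-ν - 1) := Real.rpow_pos_of_pos hzpos _
      have : z ^ (-ν - 1) * (1 - (1 + z) ^ (-ν)) = z ^ (-ν) * (1 + z) ^ (-ν - 1) := by
        have hν0' : ν ≠ 0 := hν0.ne'
        field_simp at hD0 ⊢
        nlinarith [hD0]
      rw [← hz1p] at this
      have h2 : z ^ (-ν - 1) * (1 - (1 + z) ^ (-ν)) = z ^ (-ν-1) * (z * (1 + z) ^ (-ν - 1)) := by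
        rw [this]; ring
      exact mul_left_cancel₀ hzp.ne' h2
    -- critical equation
    have hcriteq : (1 + z) ^ (1 + ν) = 1 + 2 * z := by
      have e1 : (1 + z) ^ (1 + ν) * (1 + z) ^ (-ν) = 1 + z := by
        rw [← Real.rpow_add hbz]; ring_nf; exact Real.rpow_one _
      have e2 : (1 + z) ^ (1 + ν) * (1 + z) ^ (-ν - 1) = 1 := by
        rw [← Real.rpow_add hbz]; ring_nf; exact Real.rpow_zero _
      have := congrArg (fun t => (1 + z) ^ (1 + ν) * t) heq1
      simp only [mul_sub, mul_one, e1] at this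
      rw [show (1+z)^(1+ν) * (z * (1+z)^(-ν-1)) = z * ((1+z)^(1+ν) * (1+z)^(-ν-1)) by ring, e2] at this
      linarith [this]
    -- value at critical point
    have hGz : G z = z ^ (1-ν) * (1 + z) ^ (-(1+ν)) := by
      rw [hG]
      simp only
      rw [heq1]
      rw [show z ^ (-ν) * (z * (1+z)^(-ν-1)) = (z ^ (-ν) * z) * (1+z)^(-ν-1) by ring]
      congr 1
      · have h := Real.rpow_add hzpos (-ν) 1
        rw [Real.rpow_one] at h
        rw [← h]
        congr 1; ring
      · congr 1; ring
    calc G x ≤ G z := hxle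
      _ = z ^ (1-ν) * (1 + z) ^ (-(1+ν)) := hGz
      _ ≤ C := hcrit z ⟨hzpos, hz1⟩ hcriteq

lemma caseB {ν : ℝ} (hν1 : 1/2 < ν) (hνL : (2:ℝ) ^ ν ≤ 3/2) {x : ℝ}
    (hx : x ∈ Ioc (0:ℝ) 1) :
    x ^ (-ν) * (1 - (1 + x) ^ (-ν)) ≤ 1 - 2 ^ (-ν) := by
  have hν2 : ν < 1 := by
    by_contra h
    push_neg at h
    have : (2:ℝ) ^ (1:ℝ) ≤ (2:ℝ) ^ ν :=
      Real.rpow_le_rpow_of_exponent_le (by norm_num) h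
    rw [Real.rpow_one] at this; linarith
  have hC : (0:ℝ) ≤ 1 - 2 ^ (-ν) := by
    have : (2:ℝ) ^ (-ν) ≤ 1 :=
      Real.rpow_le_one_of_one_le_of_nonpos (by norm_num) (by linarith)
    linarith
  refine crit' hν1 hν2 hC le_rfl ?_ hx
  intro z hz heq
  exfalso
  -- convexity contradiction
  have h23 : (2:ℝ) ^ (1+ν) ≤ 3 := by
    rw [Real.rpow_add (by norm_num), Real.rpow_one]
    nlinarith [Real.rpow_pos_of_pos (show (0:ℝ)<2 by norm_num) ν]
  have hsc := strictConvexOn_rpow (p := 1+ν) (by linarith)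
  have key := hsc.2 (Set.mem_Ici.mpr (by norm_num : (0:ℝ) ≤ 1))
    (Set.mem_Ici.mpr (by norm_num : (0:ℝ) ≤ 2)) (by norm_num)
    (show 0 < 1 - z by linarith [hz.2]) (show 0 < z from hz.1) (by ring)
  simp only [smul_eq_mul] at key
  rw [show (1-z)*1 + z*2 = 1 + z by ring, Real.one_rpow] at key
  rw [heq] at key
  nlinarith [hz.1]

lemma pieceA2 {ν ν₁ ν₂ zl m r s : ℝ} (hν₁ : ν₁ ≤ ν) (hν₂ : ν ≤ ν₂)
    (hν1 : 1/2 < ν₁) (hν2 : ν₂ < 1)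
    (hzl : 0 < zl) (hzl1 : zl ≤ 1)
    (hI : (1+zl) ^ (1+ν₂) < 1 + 2*zl)
    (hIII : (1-ν₂) * (2*zl+1) ≤ 2*zl)
    (hm : 0 < m) (hm1 : m ≤ ((1-ν₂)/(2*ν₂)) ^ (1-ν₁))
    (hr : r ≤ (2:ℝ) ^ (-ν₂)) (hs : zl ^ (1-ν₂) ≤ s)
    (h2 : 1 - r ≤ ν₁ * m) (h3 : s / (1+2*zl) ≤ ν₁ * m)
    {x : ℝ} (hx : x ∈ Ioc (0:ℝ) 1) :
    x ^ (-ν) * (1 - (1 + x) ^ (-ν)) ≤ ν * ((1-ν)/(2*ν)) ^ (1-ν) := by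
  have hν0 : (0:ℝ) < ν := by linarith
  have hνlt1 : ν < 1 := lt_of_le_of_lt hν₂ hν2
  have hx0pos : (0:ℝ) < (1-ν)/(2*ν) := by
    apply div_pos <;> linarith
  have hx02pos : (0:ℝ) < (1-ν₂)/(2*ν₂) := by
    apply div_pos <;> linarith
  have hx02le1 : (1-ν₂)/(2*ν₂) ≤ 1 := by
    rw [div_le_one (by linarith)]; linarith
  -- M lower bound: ν₁ * m ≤ ν * ((1-ν)/(2ν))^(1-ν)
  have hMlb : ν₁ * m ≤ ν * ((1-ν)/(2*ν)) ^ (1-ν) := by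
    have s1 : m ≤ ((1-ν₂)/(2*ν₂)) ^ ((1:ℝ)-ν) := by
      calc m ≤ ((1-ν₂)/(2*ν₂)) ^ ((1:ℝ)-ν₁) := hm1
        _ ≤ ((1-ν₂)/(2*ν₂)) ^ ((1:ℝ)-ν) :=
          Real.rpow_le_rpow_of_exponent_ge hx02pos hx02le1 (by linarith)
    have s2 : ((1-ν₂)/(2*ν₂) : ℝ) ≤ (1-ν)/(2*ν) := by
      rw [div_le_div_iff₀ (by linarith) (by linarith)]
      nlinarith
    have s3 : ((1-ν₂)/(2*ν₂)) ^ ((1:ℝ)-ν) ≤ ((1-ν)/(2*ν)) ^ ((1:ℝ)-ν) :=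
      Real.rpow_le_rpow hx02pos.le s2 (by linarith)
    calc ν₁ * m ≤ ν * m := by nlinarith
      _ ≤ ν * ((1-ν)/(2*ν)) ^ (1-ν) := by
          apply mul_le_mul_of_nonneg_left _ hν0.le
          exact s1.trans s3
  have hC : (0:ℝ) ≤ ν * ((1-ν)/(2*ν)) ^ (1-ν) := by positivity
  refine crit' (by linarith) hνlt1 hC ?_ ?_ hx
  · -- boundary
    have : (2:ℝ) ^ (-ν₂) ≤ (2:ℝ) ^ (-ν) :=
      Real.rpow_le_rpow_of_exponent_le (by norm_num) (by linarith)
    linarith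
  · -- critical points
    intro z hz heq
    obtain ⟨hz0, hz1⟩ := hz
    have hbz : (0:ℝ) < 1 + z := by linarith
    -- step 1 : zl ≤ z
    have hzzl : zl ≤ z := by
      by_contra hcon
      push_neg at hcon
      set b := z / zl with hb
      have hb0 : 0 < b := div_pos hz0 hzl
      have hb1 : b < 1 := (div_lt_one hzl).mpr hcon
      have hcx := (convexOn_rpow (p := 1+ν₂) (by linarith)).2
        (Set.mem_Ici.mpr (by norm_num : (0:ℝ) ≤ 1))
        (Set.mem_Ici.mpr (by linarith : (0:ℝ) ≤ 1 + zl))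
        (show (0:ℝ) ≤ 1 - b by linarith) hb0.le (by ring)
      simp only [smul_eq_mul] at hcx
      rw [Real.one_rpow] at hcx
      have hcomb : (1-b)*1 + b*(1+zl) = 1 + z := by
        have hbz' : b * zl = z := by rw [hb]; exact div_mul_cancel₀ z hzl.ne'
        linear_combination hbz'
      rw [hcomb] at hcx
      have hup : (1+z) ^ (1+ν) ≤ (1+z) ^ (1+ν₂) :=
        Real.rpow_le_rpow_of_exponent_le (by linarith) (by linarith)
      rw [heq] at hup
      nlinarith [mul_lt_mul_of_pos_left hI hb0]
    -- step 2 : the bound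
    have hval : z ^ ((1:ℝ)-ν) * (1+z) ^ (-(1+ν)) = z ^ ((1:ℝ)-ν) / (1+2*z) := by
      rw [Real.rpow_neg hbz.le, heq]
      ring
    rw [hval]
    have e1 : z ^ ((1:ℝ)-ν) ≤ z ^ ((1:ℝ)-ν₂) :=
      Real.rpow_le_rpow_of_exponent_ge hz0 hz1.le (by linarith)
    -- Bernoulli step : z^(1-ν₂) ≤ s * (1+2z)/(1+2zl)
    have hber : z ^ ((1:ℝ)-ν₂) ≤ s * (1+2*z)/(1+2*zl) := by
      have hdiv : z / zl = 1 + (z - zl)/zl := by field_simp; ring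
      have hB : (z/zl) ^ ((1:ℝ)-ν₂) ≤ 1 + (1-ν₂) * ((z-zl)/zl) := by
        rw [hdiv]
        have hnn : (0:ℝ) ≤ (z-zl)/zl := div_nonneg (by linarith) hzl.le
        exact rpow_one_add_le_one_add_mul_self (by linarith) (by linarith) (by linarith)
      have hzz : z ^ ((1:ℝ)-ν₂) = zl ^ ((1:ℝ)-ν₂) * (z/zl) ^ ((1:ℝ)-ν₂) := by
        rw [Real.div_rpow hz0.le hzl.le]
        field_simp
      have hzlp : (0:ℝ) < zl ^ ((1:ℝ)-ν₂) := Real.rpow_pos_of_pos hzl _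
      have step : z ^ ((1:ℝ)-ν₂) ≤ s * (1 + (1-ν₂)*((z-zl)/zl)) := by
        rw [hzz]
        have := mul_le_mul_of_nonneg_left hB hzlp.le
        calc zl ^ ((1:ℝ)-ν₂) * (z/zl) ^ ((1:ℝ)-ν₂)
            ≤ zl ^ ((1:ℝ)-ν₂) * (1 + (1-ν₂)*((z-zl)/zl)) := this
          _ ≤ s * (1 + (1-ν₂)*((z-zl)/zl)) := by
              apply mul_le_mul_of_nonneg_right hs
              have : (0:ℝ) ≤ (z-zl)/zl := by
                apply div_nonneg _ hzl.le; linarith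
              nlinarith
      refine step.trans ?_
      have hspos : 0 < s := lt_of_lt_of_le (Real.rpow_pos_of_pos hzl _) hs
      have key : (1 + (1-ν₂)*((z-zl)/zl)) * (1+2*zl) ≤ 1+2*z := by
        have hIII' : (1-ν₂) * (2*zl+1) / zl ≤ 2 := by
          rw [div_le_iff₀ hzl]; nlinarith
        have hznn : (0:ℝ) ≤ z - zl := by linarith
        have expand : (1 + (1-ν₂)*((z-zl)/zl)) * (1+2*zl)
            = 1+2*zl + (z-zl) * ((1-ν₂)*(2*zl+1)/zl) := by
          field_simp; ring
        rw [expand]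
        nlinarith [mul_le_mul_of_nonneg_left hIII' hznn]
      rw [le_div_iff₀ (show (0:ℝ) < 1+2*zl by linarith)]
      nlinarith [mul_le_mul_of_nonneg_left key hspos.le]
    have hfin : z ^ ((1:ℝ)-ν) / (1+2*z) ≤ ν₁ * m := by
      have h1z : (0:ℝ) < 1+2*z := by linarith
      rw [div_le_iff₀ h1z]
      calc z ^ ((1:ℝ)-ν) ≤ z ^ ((1:ℝ)-ν₂) := e1
        _ ≤ s * (1+2*z)/(1+2*zl) := hber
        _ = (s/(1+2*zl)) * (1+2*z) := by ring
        _ ≤ ν₁ * m * (1+2*z) := by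
            apply mul_le_mul_of_nonneg_right h3 h1z.le
    exact hfin.trans hMlb

lemma caseA1 {ν : ℝ} (hν1 : 2/3 ≤ ν) (hν2 : ν < 1) {x : ℝ} (hx : x ∈ Ioc (0:ℝ) 1) :
    x ^ (-ν) * (1 - (1 + x) ^ (-ν)) ≤ ν * ((1-ν)/(2*ν)) ^ (1-ν) := by
  obtain ⟨hx0, hx1⟩ := hx
  have hν0 : (0:ℝ) < ν := by linarith
  have ht0 : (0:ℝ) < 2*ν - 1 := by linarith
  set x₀ : ℝ := (1-ν)/(2*ν) with hx₀def
  set x₁ : ℝ := (1-ν)/(2*ν-1) with hx₁def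
  have hx₀pos : 0 < x₀ := by apply div_pos <;> linarith
  have hx₁pos : 0 < x₁ := by apply div_pos <;> linarith
  have hx₀x₁ : x₀ ≤ x₁ := by
    apply div_le_div_of_nonneg_left (by linarith) ht0 (by linarith)
  have hx₁le1 : x₁ ≤ 1 := by
    rw [div_le_one ht0]; linarith
  have hxν : (0:ℝ) < x ^ (-ν) := Real.rpow_pos_of_pos hx0 _
  have hbx : (0:ℝ) < 1 + x := by linarith
  -- reduction: g ≤ ν * x^(1-ν) * (1+x)^(-ν) and also g ≤ ν * x^(1-ν)
  have hxsplit : x ^ (-ν) * x = x ^ ((1:ℝ)-ν) := by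
    have h := Real.rpow_add hx0 (-ν) 1
    rw [Real.rpow_one] at h
    rw [← h]; congr 1; ring
  rcases le_total x x₀ with hcase | hcase
  · -- small x : g ≤ ν x^{1-ν} ≤ ν x₀^{1-ν}
    have h1 : x ^ (-ν) * (1 - (1+x) ^ (-ν)) ≤ x ^ (-ν) * (ν * x) :=
      mul_le_mul_of_nonneg_left (key0 hν0.le hν2.le hx0.le) hxν.le
    have h2 : x ^ (-ν) * (ν * x) = ν * x ^ ((1:ℝ)-ν) := by
      rw [← hxsplit]; ring
    have h3 : x ^ ((1:ℝ)-ν) ≤ x₀ ^ ((1:ℝ)-ν) :=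
      Real.rpow_le_rpow hx0.le hcase (by linarith)
    calc x ^ (-ν) * (1 - (1+x) ^ (-ν)) ≤ x ^ (-ν) * (ν * x) := h1
      _ = ν * x ^ ((1:ℝ)-ν) := h2
      _ ≤ ν * x₀ ^ ((1:ℝ)-ν) := by nlinarith
  · -- large x : need  x^{1-ν} (1+x)^{-ν} ≤ x₀^{1-ν}
    have hxb : (0:ℝ) < (1+x) ^ (-ν) := Real.rpow_pos_of_pos hbx _
    have h1 : x ^ (-ν) * (1 - (1+x) ^ (-ν)) ≤ x ^ (-ν) * (ν * x * (1+x) ^ (-ν)) :=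
      mul_le_mul_of_nonneg_left (key1 hν0.le hν2.le hx0.le) hxν.le
    have h2 : x ^ (-ν) * (ν * x * (1+x) ^ (-ν)) = ν * (x ^ ((1:ℝ)-ν) * (1+x) ^ (-ν)) := by
      rw [← hxsplit]; ring
    -- the log function
    set f : ℝ → ℝ := fun y => (1-ν)*Real.log y - ν*Real.log (1+y) with hfdef
    have hfd : ∀ y : ℝ, 0 < y → HasDerivAt f ((1-ν)/y - ν/(1+y)) y := by
      intro y hy
      have hby : (0:ℝ) < 1 + y := by linarith
      have d1 : HasDerivAt (fun y : ℝ => (1-ν)*Real.log y) ((1-ν)*y⁻¹) y :=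
        (Real.hasDerivAt_log hy.ne').const_mul _
      have d2 : HasDerivAt (fun y : ℝ => 1 + y) 1 y := by
        simpa using (hasDerivAt_id y).const_add (1:ℝ)
      have d3 : HasDerivAt (fun y : ℝ => Real.log (1+y)) (1/(1+y)) y := d2.log hby.ne'
      have d4 : HasDerivAt (fun y : ℝ => ν*Real.log (1+y)) (ν*(1/(1+y))) y := d3.const_mul _
      have := d1.sub d4
      rw [show (1-ν)/y - ν/(1+y) = (1-ν)*y⁻¹ - ν*(1/(1+y)) by ring]; exact this
    have hfc : ∀ (a b : ℝ), 0 < a → ContinuousOn f (Icc a b) := by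
      intro a b ha
      intro y hy
      have hy0 : 0 < y := lt_of_lt_of_le ha hy.1
      exact (hfd y hy0).continuousAt.continuousWithinAt
    -- monotone up to x₁
    have hmono : MonotoneOn f (Icc x₀ x₁) := by
      apply monotoneOn_of_deriv_nonneg (convex_Icc _ _) (hfc _ _ hx₀pos)
      · rw [interior_Icc]
        intro y hy
        exact (hfd y (lt_trans hx₀pos hy.1)).differentiableAt.differentiableWithinAt
      · rw [interior_Icc]
        intro y hy
        have hy0 : 0 < y := lt_trans hx₀pos hy.1
        have hby : (0:ℝ) < 1 + y := by linarith
        rw [(hfd y hy0).deriv]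
        rw [sub_nonneg, div_le_div_iff₀ hby hy0]
        have hyx₁ : y < x₁ := hy.2
        rw [hx₁def] at hyx₁
        have := (lt_div_iff₀ ht0).mp hyx₁
        nlinarith
    have hanti : AntitoneOn f (Icc x₁ 1) := by
      apply antitoneOn_of_deriv_nonpos (convex_Icc _ _) (hfc _ _ hx₁pos)
      · rw [interior_Icc]
        intro y hy
        exact (hfd y (lt_trans hx₁pos hy.1)).differentiableAt.differentiableWithinAt
      · rw [interior_Icc]
        intro y hy
        have hy0 : 0 < y := lt_trans hx₁pos hy.1
        have hby : (0:ℝ) < 1 + y := by linarith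
        rw [(hfd y hy0).deriv]
        rw [sub_nonpos, div_le_div_iff₀ hy0 hby]
        have hyx₁ : x₁ < y := hy.1
        rw [hx₁def] at hyx₁
        have := (div_lt_iff₀ ht0).mp hyx₁
        nlinarith
    have hfx : f x ≤ f x₁ := by
      rcases le_total x x₁ with h | h
      · exact hmono ⟨hcase, h⟩ ⟨hx₀x₁, le_rfl⟩ h
      · exact hanti ⟨le_rfl, hx₁le1⟩ ⟨h, hx1⟩ h
    -- key : f x₁ ≤ (1-ν) * log x₀  via  u log 2 ≤ 2 log u on [2,4]
    have hukey : ∀ u : ℝ, 2 ≤ u → u ≤ 4 → u * Real.log 2 ≤ 2 * Real.log u := by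
      intro u hu2 hu4
      have hconc := (strictConcaveOn_log_Ioi.concaveOn).2
        (Set.mem_Ioi.mpr (by norm_num : (0:ℝ) < 2))
        (Set.mem_Ioi.mpr (by norm_num : (0:ℝ) < 4))
        (show (0:ℝ) ≤ (4-u)/2 by linarith)
        (show (0:ℝ) ≤ (u-2)/2 by linarith)
        (by ring)
      simp only [smul_eq_mul] at hconc
      rw [show (4-u)/2*2 + (u-2)/2*4 = u by ring] at hconc
      have hlog4 : Real.log 4 = 2 * Real.log 2 := by
        rw [show (4:ℝ) = 2^(2:ℕ) by norm_num, Real.log_pow]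
        norm_num
      rw [hlog4] at hconc
      nlinarith [hconc]
    have hkey : f x₁ ≤ (1-ν) * Real.log x₀ := by
      set u : ℝ := (2*ν)/(2*ν-1) with hudef
      have hu2 : 2 < u := by
        rw [hudef, lt_div_iff₀ ht0]; linarith
      have hu4 : u ≤ 4 := by
        rw [hudef, div_le_iff₀ ht0]; linarith
      have hx₁u : x₁ = x₀ * u := by
        rw [hx₁def, hx₀def, hudef]; field_simp
      have h1x₁ : 1 + x₁ = u/2 := by
        rw [hx₁def, hudef, div_div, eq_div_iff (by positivity), add_mul, div_mul_eq_mul_div,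
          mul_div_assoc, mul_div_cancel_left₀ _ ht0.ne']
        ring
      have hlogx₁ : Real.log x₁ = Real.log x₀ + Real.log u := by
        rw [hx₁u, Real.log_mul hx₀pos.ne' (by positivity)]
      have hlog1x₁ : Real.log (1+x₁) = Real.log u - Real.log 2 := by
        rw [h1x₁, Real.log_div (by positivity) (by norm_num)]
      rw [hfdef]
      simp only
      rw [hlogx₁, hlog1x₁]
      have huk := hukey u hu2.le hu4
      -- need : (1-ν)(log x₀ + log u) - ν(log u - log 2) ≤ (1-ν) log x₀
      -- ⟺ (1-ν) log u - ν log u + ν log 2 ≤ 0 ⟺ ν log 2 ≤ (2ν-1) log u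
      -- from u log 2 ≤ 2 log u and u = 2ν/(2ν-1) : ν log2 = (2ν-1)(u/2)log2 ≤ (2ν-1) log u
      have h' := mul_le_mul_of_nonneg_left huk ht0.le
      have h'' : (2*ν-1) * (u * Real.log 2) = 2*ν*Real.log 2 := by
        rw [hudef]; field_simp
      have hstep : ν * Real.log 2 ≤ (2*ν-1) * Real.log u := by nlinarith [h', h'']
      nlinarith [hstep]
    -- convert back from logs
    have hHlog : Real.log (x ^ ((1:ℝ)-ν) * (1+x) ^ (-ν)) = f x := by
      rw [Real.log_mul (by positivity) (by positivity), Real.log_rpow hx0, Real.log_rpow hbx,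
        hfdef]
      ring
    have hH : x ^ ((1:ℝ)-ν) * (1+x) ^ (-ν) ≤ x₀ ^ ((1:ℝ)-ν) := by
      have hLpos : (0:ℝ) < x ^ ((1:ℝ)-ν) * (1+x) ^ (-ν) := by positivity
      have hRpos : (0:ℝ) < x₀ ^ ((1:ℝ)-ν) := Real.rpow_pos_of_pos hx₀pos _
      rw [← Real.exp_log hLpos, ← Real.exp_log hRpos]
      apply Real.exp_le_exp.mpr
      rw [hHlog, Real.log_rpow hx₀pos]
      linarith [hfx, hkey]
    calc x ^ (-ν) * (1 - (1+x) ^ (-ν)) ≤ x ^ (-ν) * (ν * x * (1+x) ^ (-ν)) := h1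
      _ = ν * (x ^ ((1:ℝ)-ν) * (1+x) ^ (-ν)) := h2
      _ ≤ ν * x₀ ^ ((1:ℝ)-ν) := mul_le_mul_of_nonneg_left hH hν0.le

-- helper : lower bound for 2^{-ν₂}
lemma inv_rpow_ge {r ν₂ : ℝ} (hr : 0 < r) (h : (2:ℝ) ^ ν₂ ≤ r⁻¹) : r ≤ (2:ℝ) ^ (-ν₂) := by
  rw [Real.rpow_neg (by norm_num : (0:ℝ) ≤ 2)]
  calc r = (r⁻¹)⁻¹ := by rw [inv_inv]
    _ ≤ ((2:ℝ) ^ ν₂)⁻¹ := by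
        apply inv_anti₀ (Real.rpow_pos_of_pos (by norm_num) _) h

end Stmt1Aux

open Stmt1Aux in
theorem stmt1 (x ν : ℝ) (hx : x ∈ Set.Ioc (0 : ℝ) 1) (hν : ν ∈ Set.Ioc (1/2 : ℝ) 1) :
    (ν ∈ Set.Ioc (Real.logb 2 1.5) 1 →
      x ^ (-ν) * (1 - (1 + x) ^ (-ν)) ≤ ν * ((1 - ν) / (2 * ν)) ^ (1 - ν)) ∧
    (ν ∈ Set.Ioc (1/2 : ℝ) (Real.logb 2 1.5) →
      x ^ (-ν) * (1 - (1 + x) ^ (-ν)) ≤ 1 - 2 ^ (-ν)) := by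
  constructor
  · rintro ⟨hL, hν1⟩
    have h2950 : (29:ℝ)/50 ≤ Real.logb 2 1.5 := by
      rw [Real.le_logb_iff_rpow_le (by norm_num) (by norm_num)]
      have : ((29:ℕ):ℝ)/((50:ℕ):ℝ) = (29:ℝ)/50 := by norm_num
      rw [← this]
      apply rpow_div_le 29 50 (by norm_num) (by norm_num) (by norm_num)
      norm_num
    have hν2950 : (29:ℝ)/50 < ν := lt_of_le_of_lt h2950 hL
    rcases le_or_gt ν (3/5) with hc1 | hc1
    · refine pieceA2 (ν₁ := 29/50) (ν₂ := 3/5) (zl := 9/10) (m := 63/100) (r := 659/1000)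
        (s := 959/1000) hν2950.le hc1 (by norm_num) (by norm_num) (by norm_num) (by norm_num)
        ?_ (by norm_num) (by norm_num) ?_ ?_ ?_ (by norm_num) (by norm_num) hx
      · -- (19/10)^(8/5) < 14/5
        have e : (1:ℝ) + 3/5 = ((8:ℕ):ℝ)/((5:ℕ):ℝ) := by norm_num
        rw [show ((1:ℝ)+9/10) = 19/10 by norm_num, show (1+2*(9/10):ℝ) = 14/5 by norm_num, e]
        apply rpow_div_lt 8 5 (by norm_num) (by norm_num) (by norm_num)
        norm_num
      · -- 63/100 ≤ (1/3)^(21/50)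
        have e : ((1:ℝ)-3/5)/(2*(3/5)) = 1/3 := by norm_num
        have e2 : (1:ℝ) - 29/50 = ((21:ℕ):ℝ)/((50:ℕ):ℝ) := by norm_num
        rw [e, e2]
        apply le_rpow_div 21 50 (by norm_num) (by norm_num) (by norm_num)
        norm_num
      · -- 659/1000 ≤ 2^(-(3/5))
        apply inv_rpow_ge (by norm_num)
        have e : (3:ℝ)/5 = ((3:ℕ):ℝ)/((5:ℕ):ℝ) := by norm_num
        rw [e, show ((659:ℝ)/1000)⁻¹ = 1000/659 by norm_num]
        apply rpow_div_le 3 5 (by norm_num) (by norm_num) (by norm_num)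
        norm_num
      · -- (9/10)^(2/5) ≤ 959/1000
        have e : (1:ℝ) - 3/5 = ((2:ℕ):ℝ)/((5:ℕ):ℝ) := by norm_num
        rw [e]
        apply rpow_div_le 2 5 (by norm_num) (by norm_num) (by norm_num)
        norm_num
    · rcases le_or_gt ν (5/8) with hc2 | hc2
      · refine pieceA2 (ν₁ := 3/5) (ν₂ := 5/8) (zl := 4/5) (m := 617/1000) (r := 81/125)
          (s := 23/25) hc1.le hc2 (by norm_num) (by norm_num) (by norm_num) (by norm_num)
          ?_ (by norm_num) (by norm_num) ?_ ?_ ?_ (by norm_num) (by norm_num) hx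
        · have e : (1:ℝ) + 5/8 = ((13:ℕ):ℝ)/((8:ℕ):ℝ) := by norm_num
          rw [show ((1:ℝ)+4/5) = 9/5 by norm_num, show (1+2*(4/5):ℝ) = 13/5 by norm_num, e]
          apply rpow_div_lt 13 8 (by norm_num) (by norm_num) (by norm_num)
          norm_num
        · have e : ((1:ℝ)-5/8)/(2*(5/8)) = 3/10 := by norm_num
          have e2 : (1:ℝ) - 3/5 = ((2:ℕ):ℝ)/((5:ℕ):ℝ) := by norm_num
          rw [e, e2]
          apply le_rpow_div 2 5 (by norm_num) (by norm_num) (by norm_num)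
          norm_num
        · apply inv_rpow_ge (by norm_num)
          have e : (5:ℝ)/8 = ((5:ℕ):ℝ)/((8:ℕ):ℝ) := by norm_num
          rw [e, show ((81:ℝ)/125)⁻¹ = 125/81 by norm_num]
          apply rpow_div_le 5 8 (by norm_num) (by norm_num) (by norm_num)
          norm_num
        · have e : (1:ℝ) - 5/8 = ((3:ℕ):ℝ)/((8:ℕ):ℝ) := by norm_num
          rw [e]
          apply rpow_div_le 3 8 (by norm_num) (by norm_num) (by norm_num)
          norm_num
      · rcases le_or_gt ν (13/20) with hc3 | hc3
        · refine pieceA2 (ν₁ := 5/8) (ν₂ := 13/20) (zl := 13/20) (m := 611/1000) (r := 637/1000)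
            (s := 861/1000) hc2.le hc3 (by norm_num) (by norm_num) (by norm_num) (by norm_num)
            ?_ (by norm_num) (by norm_num) ?_ ?_ ?_ (by norm_num) (by norm_num) hx
          · have e : (1:ℝ) + 13/20 = ((33:ℕ):ℝ)/((20:ℕ):ℝ) := by norm_num
            rw [show ((1:ℝ)+13/20) = 33/20 by norm_num] at e ⊢
            rw [show (1+2*(13/20):ℝ) = 23/10 by norm_num, e]
            apply rpow_div_lt 33 20 (by norm_num) (by norm_num) (by norm_num)
            norm_num
          · have e : ((1:ℝ)-13/20)/(2*(13/20)) = 7/26 := by norm_num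
            have e2 : (1:ℝ) - 5/8 = ((3:ℕ):ℝ)/((8:ℕ):ℝ) := by norm_num
            rw [e, e2]
            apply le_rpow_div 3 8 (by norm_num) (by norm_num) (by norm_num)
            norm_num
          · apply inv_rpow_ge (by norm_num)
            have e : (13:ℝ)/20 = ((13:ℕ):ℝ)/((20:ℕ):ℝ) := by norm_num
            rw [e, show ((637:ℝ)/1000)⁻¹ = 1000/637 by norm_num]
            apply rpow_div_le 13 20 (by norm_num) (by norm_num) (by norm_num)
            norm_num
          · have e : (1:ℝ) - 13/20 = ((7:ℕ):ℝ)/((20:ℕ):ℝ) := by norm_num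
            rw [e]
            apply rpow_div_le 7 20 (by norm_num) (by norm_num) (by norm_num)
            norm_num
        · rcases le_or_gt ν (2/3) with hc4 | hc4
          · refine pieceA2 (ν₁ := 13/20) (ν₂ := 2/3) (zl := 3/5) (m := 123/200) (r := 629/1000)
              (s := 211/250) hc3.le hc4 (by norm_num) (by norm_num) (by norm_num) (by norm_num)
              ?_ (by norm_num) (by norm_num) ?_ ?_ ?_ (by norm_num) (by norm_num) hx
            · have e : (1:ℝ) + 2/3 = ((5:ℕ):ℝ)/((3:ℕ):ℝ) := by norm_num
              rw [show ((1:ℝ)+3/5) = 8/5 by norm_num, show (1+2*(3/5):ℝ) = 11/5 by norm_num, e]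
              apply rpow_div_lt 5 3 (by norm_num) (by norm_num) (by norm_num)
              norm_num
            · have e : ((1:ℝ)-2/3)/(2*(2/3)) = 1/4 := by norm_num
              have e2 : (1:ℝ) - 13/20 = ((7:ℕ):ℝ)/((20:ℕ):ℝ) := by norm_num
              rw [e, e2]
              apply le_rpow_div 7 20 (by norm_num) (by norm_num) (by norm_num)
              norm_num
            · apply inv_rpow_ge (by norm_num)
              have e : (2:ℝ)/3 = ((2:ℕ):ℝ)/((3:ℕ):ℝ) := by norm_num
              rw [e, show ((629:ℝ)/1000)⁻¹ = 1000/629 by norm_num]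
              apply rpow_div_le 2 3 (by norm_num) (by norm_num) (by norm_num)
              norm_num
            · have e : (1:ℝ) - 2/3 = ((1:ℕ):ℝ)/((3:ℕ):ℝ) := by norm_num
              rw [e]
              apply rpow_div_le 1 3 (by norm_num) (by norm_num) (by norm_num)
              norm_num
          · rcases eq_or_lt_of_le hν1 with heq | hlt
            · subst heq
              exact caseNu1 hx
            · exact caseA1 hc4.le hlt hx
  · rintro ⟨hν1, hνL⟩
    apply caseB hν1 _ hx
    have h := Real.rpow_le_rpow_of_exponent_le (by norm_num : (1:ℝ) ≤ 2) hνL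
    rw [Real.rpow_logb (by norm_num) (by norm_num) (by norm_num)] at h
    calc (2:ℝ) ^ ν ≤ 1.5 := h
      _ = 3/2 := by norm_num
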